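/- For θ ∈ [-π, π], the function f(θ) = sin θ + sin(θ/2) attains its maximum value ν = sin χ + sin(χ/2) at θ = χ and its minimum value -ν at θ = -χ, where χ = 2·arccos((-1 + √33)/8). -/
import Mathlib
open Real

lemma key_ineq (c0 : ℝ) (h0 : 4*c0^2 + c0 - 2 = 0) (hc0 : 0 ≤ c0)
    (s c s0 : ℝ) (hsc : s^2 + c^2 = 1) (hc : 0 ≤ c)
    (hs0 : s0 = Real.sqrt (1 - c0^2)) : s * (2*c + 1) ≤ s0 * (2*c0 + 1) := by
  have hc01 : c0 ≤ 1 := by nlinarith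
  have hs0sq : s0^2 = 1 - c0^2 := by
    rw [hs0, Real.sq_sqrt]; nlinarith
  have hs0n : 0 ≤ s0 := by rw [hs0]; exact Real.sqrt_nonneg _
  have hrhs : 0 ≤ s0 * (2*c0+1) := by positivity
  have hsq : (s*(2*c+1))^2 ≤ (s0*(2*c0+1))^2 := by
    nlinarith [sq_nonneg (c - c0), mul_nonneg (sq_nonneg (c-c0)) hc,
      mul_nonneg (mul_nonneg (sq_nonneg (c-c0)) hc) hc,
      mul_nonneg hc0 (sq_nonneg (c-c0)),
      mul_nonneg (mul_nonneg hc0 (sq_nonneg (c-c0))) hc]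
  nlinarith [hrhs, hsq]

theorem max_min_of_sin_add_sin_half
    (χ ν : ℝ) (hχ : χ = 2 * arccos ((-1 + Real.sqrt 33) / 8))
    (hν : ν = sin χ + sin (χ / 2)) :
    (∀ θ ∈ Set.Icc (-π) π, sin θ + sin (θ / 2) ≤ ν ∧ -ν ≤ sin θ + sin (θ / 2)) ∧
    χ ∈ Set.Icc (-π) π ∧ (-χ) ∈ Set.Icc (-π) π ∧
    sin χ + sin (χ / 2) = ν ∧ sin (-χ) + sin (-χ / 2) = -ν := by
  set c0 : ℝ := (-1 + Real.sqrt 33) / 8 with hc0def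
  have hs33 : Real.sqrt 33 ^ 2 = 33 := Real.sq_sqrt (by norm_num)
  have hs33n : 0 ≤ Real.sqrt 33 := Real.sqrt_nonneg _
  have hs33lb : (5:ℝ) ≤ Real.sqrt 33 := by nlinarith
  have hc0 : 0 ≤ c0 := by rw [hc0def]; nlinarith
  have hc01 : c0 ≤ 1 := by rw [hc0def]; nlinarith
  have h0 : 4*c0^2 + c0 - 2 = 0 := by
    rw [hc0def]; field_simp; nlinarith
  have hhalf : χ / 2 = arccos c0 := by rw [hχ]; ring
  have hcos : cos (χ/2) = c0 := by rw [hhalf]; exact Real.cos_arccos (by linarith) hc01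
  have hsin : sin (χ/2) = Real.sqrt (1 - c0^2) := by
    rw [hhalf, Real.sin_arccos]
  -- χ ∈ [-π, π]
  have harccos_le : arccos c0 ≤ π/2 := (Real.arccos_le_pi_div_two).2 hc0
  have harccos_nn : 0 ≤ arccos c0 := Real.arccos_nonneg _
  have hχmem : χ ∈ Set.Icc (-π) π := by
    constructor <;> rw [hχ] <;> [linarith [Real.pi_pos]; linarith]
  -- ν = s0 * (2 c0 + 1)
  have hsinχ : sin χ = 2 * sin (χ/2) * cos (χ/2) := by
    rw [← Real.sin_two_mul]; ring_nf
  have hνval : ν = Real.sqrt (1 - c0^2) * (2*c0 + 1) := by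
    rw [hν, hsinχ, hsin, hcos]; ring
  refine ⟨?_, hχmem, ⟨by linarith [hχmem.2], by linarith [hχmem.1]⟩, hν.symm, ?_⟩
  · intro θ hθ
    have hc : 0 ≤ cos (θ/2) := Real.cos_nonneg_of_mem_Icc
      ⟨by linarith [hθ.1], by linarith [hθ.2]⟩
    have hsc : sin (θ/2)^2 + cos (θ/2)^2 = 1 := Real.sin_sq_add_cos_sq _
    have hsc' : (-sin (θ/2))^2 + cos (θ/2)^2 = 1 := by rw [neg_pow]; simp [hsc]
    have hsinθ : sin θ = 2 * sin (θ/2) * cos (θ/2) := by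
      rw [← Real.sin_two_mul]; ring_nf
    have h1 := key_ineq c0 h0 hc0 (sin (θ/2)) (cos (θ/2)) _ hsc hc rfl
    have h2 := key_ineq c0 h0 hc0 (-sin (θ/2)) (cos (θ/2)) _ hsc' hc rfl
    constructor <;> rw [hsinθ, hνval] <;> nlinarith
  · rw [neg_div, Real.sin_neg, Real.sin_neg, hν]; ring
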